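/- Let S ⊂ ℝ^d be a finite set with AffineDim(S) = d and barycenter b, and fix two points x_i, x_j ∈ S with AffineDim({b, x_i, x_j}) = 2. Among all x_k ∈ S with AffineDim({b, x_i, x_j, x_k}) = 3, let x_k minimize the solid angle of Cone(x_i − b, x_j − b, x_k − b). Then no point x ∈ S satisfies x − b ∈ Interior(Cone(x_i − b, x_j − b, x_k − b)). -/

import Mathlib

/-- The cone generated by three vectors in `ℝ³`. -/
def cone13 (u₁ u₂ u₃ : EuclideanSpace ℝ (Fin 3)) : Set (EuclideanSpace ℝ (Fin 3)) :=
  {x | ∃ a b c : ℝ, 0 ≤ a ∧ 0 ≤ b ∧ 0 ≤ c ∧ x = a • u₁ + b • u₂ + c • u₃}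

open Module Set MeasureTheory Metric

local notation "E" => EuclideanSpace ℝ (Fin 3)

lemma coeff_eq {u v w : E} (h : LinearIndependent ℝ ![u, v, w])
    {a₁ b₁ c₁ a₂ b₂ c₂ : ℝ}
    (heq : a₁ • u + b₁ • v + c₁ • w = a₂ • u + b₂ • v + c₂ • w) :
    a₁ = a₂ ∧ b₁ = b₂ ∧ c₁ = c₂ := by
  have key := Fintype.linearIndependent_iff.mp h ![a₁ - a₂, b₁ - b₂, c₁ - c₂] ?_
  · exact ⟨sub_eq_zero.mp (by simpa using key 0), sub_eq_zero.mp (by simpa using key 1),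
      sub_eq_zero.mp (by simpa using key 2)⟩
  · rw [Fin.sum_univ_three]
    simp only [Matrix.cons_val_zero, Matrix.cons_val_one, Matrix.head_cons,
      Matrix.cons_val_two, Matrix.tail_cons]
    rw [sub_smul, sub_smul, sub_smul]
    rw [show a₁ • u - a₂ • u + (b₁ • v - b₂ • v) + (c₁ • w - c₂ • w)
        = (a₁ • u + b₁ • v + c₁ • w) - (a₂ • u + b₂ • v + c₂ • w) by abel, heq, sub_self]

lemma repr_combo (B : Basis (Fin 3) ℝ E) (a b c : ℝ) (i : Fin 3) :
    B.repr (a • B 0 + b • B 1 + c • B 2) i = ![a, b, c] i := by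
  have : B.repr (a • B 0 + b • B 1 + c • B 2)
      = a • Finsupp.single 0 1 + b • Finsupp.single 1 1 + c • Finsupp.single 2 1 := by
    simp [Basis.repr_self]
  rw [this]
  fin_cases i <;> simp [Finsupp.single_apply]

lemma cone13_eq_coord (B : Basis (Fin 3) ℝ E) :
    cone13 (B 0) (B 1) (B 2) = {z | ∀ i, 0 ≤ B.repr z i} := by
  ext z
  constructor
  · rintro ⟨a, b, c, ha, hb, hc, rfl⟩ i
    rw [repr_combo]
    fin_cases i <;> simpa
  · intro hz
    refine ⟨B.repr z 0, B.repr z 1, B.repr z 2, hz 0, hz 1, hz 2, ?_⟩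
    have := B.sum_repr z
    rw [Fin.sum_univ_three] at this
    exact this.symm

lemma isClosed_cone13 (B : Basis (Fin 3) ℝ E) :
    IsClosed {z : E | ∀ i, 0 ≤ B.repr z i} := by
  have : {z : E | ∀ i, 0 ≤ B.repr z i} = ⋂ i, (fun z => B.coord i z) ⁻¹' Set.Ici 0 := by
    ext z; simp [Basis.coord_apply]
  rw [this]
  exact isClosed_iInter fun i =>
    IsClosed.preimage (B.coord i).continuous_of_finiteDimensional isClosed_Ici

lemma isOpen_pos_coord (B : Basis (Fin 3) ℝ E) :
    IsOpen {z : E | ∀ i, 0 < B.repr z i} := by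
  have : {z : E | ∀ i, 0 < B.repr z i} = ⋂ i, (fun z => B.coord i z) ⁻¹' Set.Ioi 0 := by
    ext z; simp [Basis.coord_apply]
  rw [this]
  exact isOpen_iInter_of_finite fun i =>
    IsOpen.preimage (B.coord i).continuous_of_finiteDimensional isOpen_Ioi

lemma coord_pos_of_interior {C : Set E} {f : E →ₗ[ℝ] ℝ} (hC : ∀ z ∈ C, 0 ≤ f z)
    {y₀ : E} (hy₀ : f y₀ = 1) {x : E} (hx : x ∈ interior C) : 0 < f x := by
  rcases Metric.isOpen_iff.mp isOpen_interior x hx with ⟨ε, hε, hball⟩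
  rcases (hC x (interior_subset hx)).lt_or_eq with h | h
  · exact h
  · exfalso
    set δ := ε / (2 * (‖y₀‖ + 1)) with hδdef
    have hδ : 0 < δ := by positivity
    have hmem : x - δ • y₀ ∈ C := by
      apply interior_subset (hball ?_)
      rw [Metric.mem_ball, dist_eq_norm]
      have hx' : x - δ • y₀ - x = -(δ • y₀) := by abel
      rw [hx', norm_neg, norm_smul, Real.norm_eq_abs, abs_of_pos hδ]
      have h1 : δ * ‖y₀‖ ≤ δ * (‖y₀‖ + 1) := by nlinarith
      have h2 : δ * (‖y₀‖ + 1) = ε / 2 := by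
        rw [hδdef]; field_simp
      linarith
    have hf := hC _ hmem
    rw [map_sub, _root_.map_smul, hy₀, ← h] at hf
    simp only [smul_eq_mul, mul_one, zero_sub, le_neg] at hf
    linarith

lemma smul_mem_cone13 {u v w z : E} (hz : z ∈ cone13 u v w) {s : ℝ} (hs : 0 ≤ s) :
    s • z ∈ cone13 u v w := by
  obtain ⟨a, b, c, ha, hb, hc, rfl⟩ := hz
  exact ⟨s * a, s * b, s * c, by positivity, by positivity, by positivity, by
    simp [smul_add, smul_smul]⟩

lemma indep_shift {u v w : E} (h : LinearIndependent ℝ ![u, v, w]) {ca cb cc : ℝ}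
    (hcc : cc ≠ 0) : LinearIndependent ℝ ![u, v, ca • u + cb • v + cc • w] := by
  rw [Fintype.linearIndependent_iff]
  intro g hg
  rw [Fin.sum_univ_three] at hg
  simp only [Matrix.cons_val_zero, Matrix.cons_val_one, Matrix.head_cons,
    Matrix.cons_val_two, Matrix.tail_cons] at hg
  have hg' : (g 0 + g 2 * ca) • u + (g 1 + g 2 * cb) • v + (g 2 * cc) • w
      = (0:ℝ) • u + (0:ℝ) • v + (0:ℝ) • w := by
    linear_combination (norm := module) hg
  obtain ⟨h1, h2, h3⟩ := coeff_eq h hg'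
  have hg2 : g 2 = 0 := by
    rcases mul_eq_zero.mp h3 with h | h
    · exact h
    · exact absurd h hcc
  intro i
  fin_cases i
  · simpa [hg2] using h1
  · simpa [hg2] using h2
  · exact hg2

set_option maxHeartbeats 1000000 in
/-- Minimal-angle cone selection: if `x_k` minimizes the solid angle of the cone
`Cone(xᵢ−b, xⱼ−b, x−b)` among all points `x ∈ S` making `{b,xᵢ,xⱼ,x}` affinely
3-dimensional, then no point of `S` lies (relative to `b`) in the interior of the chosen cone. -/
theorem minimal_angle_cone_empty_interior
    (S : Finset (EuclideanSpace ℝ (Fin 3))) (hS : S.Nonempty)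
    (hdim : Module.finrank ℝ (vectorSpan ℝ (S : Set (EuclideanSpace ℝ (Fin 3)))) = 3)
    (b : EuclideanSpace ℝ (Fin 3)) (hb : b = (S.card : ℝ)⁻¹ • ∑ x ∈ S, x)
    (xi xj xk : EuclideanSpace ℝ (Fin 3))
    (hxi : xi ∈ S) (hxj : xj ∈ S) (hxk : xk ∈ S)
    (hij : Module.finrank ℝ
      (vectorSpan ℝ ({b, xi, xj} : Set (EuclideanSpace ℝ (Fin 3)))) = 2)
    (hk3 : Module.finrank ℝ
      (vectorSpan ℝ ({b, xi, xj, xk} : Set (EuclideanSpace ℝ (Fin 3)))) = 3)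
    (hmin : ∀ x ∈ S, Module.finrank ℝ
        (vectorSpan ℝ ({b, xi, xj, x} : Set (EuclideanSpace ℝ (Fin 3)))) = 3 →
      MeasureTheory.volume (cone13 (xi - b) (xj - b) (xk - b) ∩ Metric.closedBall 0 1) ≤
      MeasureTheory.volume (cone13 (xi - b) (xj - b) (x - b) ∩ Metric.closedBall 0 1)) :
    ∀ x ∈ S, x - b ∉ interior (cone13 (xi - b) (xj - b) (xk - b)) := by
  intro x hx hxint
  set u : E := xi - b with hu
  set v : E := xj - b with hv
  set w : E := xk - b with hw
  set y : E := x - b with hy0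
  -- Step 1: `![u, v, w]` is linearly independent.
  have hsub : vectorSpan ℝ ({b, xi, xj, xk} : Set E)
      ≤ Submodule.span ℝ (Set.range ![u, v, w]) := by
    rw [vectorSpan_def]
    refine Submodule.span_le.mpr ?_
    rintro t ⟨p, hp, q, hq, rfl⟩
    have key : ∀ p ∈ ({b, xi, xj, xk} : Set E),
        p - b ∈ Submodule.span ℝ (Set.range ![u, v, w]) := by
      intro p hp
      simp only [Set.mem_insert_iff, Set.mem_singleton_iff] at hp
      rcases hp with rfl | rfl | rfl | rfl
      · simp
      · exact Submodule.subset_span ⟨0, rfl⟩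
      · exact Submodule.subset_span ⟨1, rfl⟩
      · exact Submodule.subset_span ⟨2, rfl⟩
    show p -ᵥ q ∈ _
    have hpq : p -ᵥ q = (p - b) - (q - b) := by
      rw [vsub_eq_sub]; abel
    rw [hpq]
    exact sub_mem (key p hp) (key q hq)
  have hindep : LinearIndependent ℝ ![u, v, w] := by
    rw [linearIndependent_iff_card_eq_finrank_span]
    have h1 : finrank ℝ (vectorSpan ℝ ({b, xi, xj, xk} : Set E))
        ≤ finrank ℝ (Submodule.span ℝ (Set.range ![u, v, w])) :=
      Submodule.finrank_mono hsub
    rw [hk3] at h1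
    have h2 : (Set.range ![u, v, w]).finrank ℝ ≤ 3 := by
      simpa using finrank_range_le_card ![u, v, w]
    show Fintype.card (Fin 3) = (Set.range ![u, v, w]).finrank ℝ
    have h1' : 3 ≤ (Set.range ![u, v, w]).finrank ℝ := h1
    simp only [Fintype.card_fin]
    omega
  -- Step 2: the basis given by `u, v, w`.
  have hcard : Fintype.card (Fin 3) = Module.finrank ℝ E := by
    simp [finrank_euclideanSpace]
  set B : Basis (Fin 3) ℝ E := basisOfLinearIndependentOfCardEqFinrank hindep hcard with hBdef
  have hB : ⇑B = ![u, v, w] := coe_basisOfLinearIndependentOfCardEqFinrank hindep hcard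
  have hB0 : B 0 = u := by rw [show B 0 = ![u,v,w] 0 from congrFun hB 0]; rfl
  have hB1 : B 1 = v := by rw [show B 1 = ![u,v,w] 1 from congrFun hB 1]; rfl
  have hB2 : B 2 = w := by rw [show B 2 = ![u,v,w] 2 from congrFun hB 2]; rfl
  have hC : cone13 u v w = {z : E | ∀ i, 0 ≤ B.repr z i} := by
    rw [← hB0, ← hB1, ← hB2]; exact cone13_eq_coord B
  -- Step 3: coordinates of `y` are positive.
  have hposy : ∀ i, 0 < B.repr y i := by
    intro i
    have hnn : ∀ z ∈ cone13 u v w, 0 ≤ B.coord i z := by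
      intro z hz
      rw [hC] at hz
      simpa [Basis.coord_apply] using hz i
    have h1 : B.coord i (B i) = 1 := by simp [Basis.coord_apply]
    simpa [Basis.coord_apply] using coord_pos_of_interior hnn h1 hxint
  set ca := B.repr y 0 with hca_def
  set cb := B.repr y 1 with hcb_def
  set cc := B.repr y 2 with hcc_def
  have hca : 0 < ca := hposy 0
  have hcb : 0 < cb := hposy 1
  have hcc : 0 < cc := hposy 2
  have hyrep : y = ca • u + cb • v + cc • w := by
    have := B.sum_repr y
    rw [Fin.sum_univ_three, hB0, hB1, hB2] at this
    exact this.symm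
  -- Step 4: `![u, v, y]` is independent; the small cone.
  have hindep' : LinearIndependent ℝ ![u, v, y] := by
    rw [hyrep]; exact indep_shift hindep hcc.ne'
  set B' : Basis (Fin 3) ℝ E := basisOfLinearIndependentOfCardEqFinrank hindep' hcard
    with hB'def
  have hB' : ⇑B' = ![u, v, y] := coe_basisOfLinearIndependentOfCardEqFinrank hindep' hcard
  have hB'0 : B' 0 = u := by rw [show B' 0 = ![u,v,y] 0 from congrFun hB' 0]; rfl
  have hB'1 : B' 1 = v := by rw [show B' 1 = ![u,v,y] 1 from congrFun hB' 1]; rfl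
  have hB'2 : B' 2 = y := by rw [show B' 2 = ![u,v,y] 2 from congrFun hB' 2]; rfl
  have hC' : cone13 u v y = {z : E | ∀ i, 0 ≤ B'.repr z i} := by
    rw [← hB'0, ← hB'1, ← hB'2]; exact cone13_eq_coord B'
  have hC'closed : IsClosed (cone13 u v y) := hC' ▸ isClosed_cone13 B'
  -- Step 5: the dimension hypothesis for `x`, so `hmin` applies.
  have hdimx : Module.finrank ℝ (vectorSpan ℝ ({b, xi, xj, x} : Set E)) = 3 := by
    have hspan_top : Submodule.span ℝ (Set.range ![u, v, y]) = ⊤ := by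
      apply Submodule.eq_top_of_finrank_eq
      rw [finrank_span_eq_card hindep']
      simp [finrank_euclideanSpace]
    have hle : Submodule.span ℝ (Set.range ![u, v, y])
        ≤ vectorSpan ℝ ({b, xi, xj, x} : Set E) := by
      refine Submodule.span_le.mpr ?_
      rintro t ⟨i, rfl⟩
      fin_cases i
      · simpa [vsub_eq_sub] using
          vsub_mem_vectorSpan ℝ (show xi ∈ ({b, xi, xj, x} : Set E) by simp)
            (show b ∈ ({b, xi, xj, x} : Set E) by simp)
      · simpa [vsub_eq_sub] using
          vsub_mem_vectorSpan ℝ (show xj ∈ ({b, xi, xj, x} : Set E) by simp)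
            (show b ∈ ({b, xi, xj, x} : Set E) by simp)
      · simpa [vsub_eq_sub] using
          vsub_mem_vectorSpan ℝ (show x ∈ ({b, xi, xj, x} : Set E) by simp)
            (show b ∈ ({b, xi, xj, x} : Set E) by simp)
    have htop : vectorSpan ℝ ({b, xi, xj, x} : Set E) = ⊤ :=
      le_antisymm le_top (hspan_top ▸ hle)
    rw [htop, finrank_top]
    simp [finrank_euclideanSpace]
  have hmin' := hmin x hx hdimx
  -- Step 6: the small cone is contained in the big one.
  have hsubC : cone13 u v y ⊆ cone13 u v w := by
    rintro z ⟨α, β, γ, hα, hβ, hγ, rfl⟩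
    refine ⟨α + γ * ca, β + γ * cb, γ * cc, by positivity, by positivity, by positivity, ?_⟩
    rw [hyrep]
    module
  -- Step 7: the point `p` in the big cone but not the small one.
  set t : ℝ := ca / (2 * cc) with ht_def
  have ht : 0 < t := by positivity
  set p : E := t • u + t • v + (1:ℝ) • w with hp_def
  have hpnotC' : p ∉ cone13 u v y := by
    rintro ⟨α, β, γ, hα, hβ, hγ, hpeq⟩
    have hpeq' : t • u + t • v + (1:ℝ) • w
        = (α + γ * ca) • u + (β + γ * cb) • v + (γ * cc) • w := by
      rw [← hp_def, hpeq, hyrep]; module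
    obtain ⟨h1, h2, h3⟩ := coeff_eq hindep hpeq'
    have e1 : γ * cc = 1 := h3.symm
    rw [ht_def, div_eq_iff (ne_of_gt (by positivity : (0:ℝ) < 2 * cc))] at h1
    have e2 : γ * ca * cc = ca := by
      rw [mul_comm γ ca, mul_assoc, e1, mul_one]
    nlinarith [mul_nonneg hα hcc.le, hca]
  have hreprp : ∀ i, 0 < B.repr p i := by
    intro i
    have : B.repr p i = ![t, t, 1] i := by
      rw [hp_def, ← hB0, ← hB1, ← hB2]; exact repr_combo B t t 1 i
    rw [this]
    fin_cases i <;> simp [ht]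
  have hp0 : p ≠ 0 := by
    intro h
    have := hreprp 2
    rw [h] at this
    simp at this
  -- Step 8: normalize to `q` of norm 1/2.
  set s : ℝ := (2 * ‖p‖)⁻¹ with hs_def
  have hnp : 0 < ‖p‖ := norm_pos_iff.mpr hp0
  have hs : 0 < s := by positivity
  set q : E := s • p with hq_def
  have hreprq : ∀ i, 0 < B.repr q i := by
    intro i
    rw [hq_def, _root_.map_smul]
    have := hreprp i
    simp only [Finsupp.smul_apply, smul_eq_mul]
    positivity
  have hqnotC' : q ∉ cone13 u v y := by
    intro hq
    apply hpnotC'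
    have : s⁻¹ • q = p := by
      rw [hq_def, smul_smul, inv_mul_cancel₀ hs.ne', one_smul]
    rw [← this]
    exact smul_mem_cone13 hq (by positivity)
  have hqnorm : ‖q‖ = 1 / 2 := by
    rw [hq_def, norm_smul, Real.norm_eq_abs, abs_of_pos hs, hs_def]
    field_simp
  -- Step 9: an open neighbourhood of `q` inside `(C ∩ B₁) \ C'`.
  set V : Set E := {z : E | ∀ i, 0 < B.repr z i} ∩ (cone13 u v y)ᶜ ∩ Metric.ball 0 1
    with hV_def
  have hVopen : IsOpen V :=
    (((isOpen_pos_coord B).inter hC'closed.isOpen_compl).inter Metric.isOpen_ball)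
  have hqV : q ∈ V := by
    refine ⟨⟨hreprq, hqnotC'⟩, ?_⟩
    rw [Metric.mem_ball, dist_zero_right, hqnorm]
    norm_num
  have hVsub : V ⊆ (cone13 u v w ∩ Metric.closedBall 0 1) := by
    rintro z ⟨⟨hz1, _⟩, hz3⟩
    refine ⟨?_, Metric.ball_subset_closedBall hz3⟩
    rw [hC]
    exact fun i => (hz1 i).le
  obtain ⟨r, hr, hball⟩ := Metric.isOpen_iff.mp hVopen q hqV
  have hballV : Metric.ball q r ⊆ V := hball
  -- Step 10: the measure-theoretic contradiction.
  have hballpos : 0 < volume (Metric.ball q r) := Metric.measure_ball_pos _ _ hr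
  have hdisj : Disjoint (cone13 u v y ∩ Metric.closedBall 0 1) (Metric.ball q r) := by
    rw [Set.disjoint_right]
    intro z hz hz'
    exact (hballV hz).1.2 hz'.1
  have hunion_sub : (cone13 u v y ∩ Metric.closedBall 0 1) ∪ Metric.ball q r
      ⊆ cone13 u v w ∩ Metric.closedBall 0 1 := by
    rintro z (hz | hz)
    · exact ⟨hsubC hz.1, hz.2⟩
    · exact hVsub (hballV hz)
  have hmeasU : volume ((cone13 u v y ∩ Metric.closedBall 0 1) ∪ Metric.ball q r)
      = volume (cone13 u v y ∩ Metric.closedBall 0 1) + volume (Metric.ball q r) :=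
    measure_union hdisj measurableSet_ball
  have hfin : volume (cone13 u v y ∩ Metric.closedBall 0 1) ≠ ⊤ := by
    refine ne_top_of_le_ne_top (measure_closedBall_lt_top (μ := volume) (x := (0:E)) (r := 1)).ne ?_
    exact measure_mono Set.inter_subset_right
  have hchain : volume (cone13 u v y ∩ Metric.closedBall 0 1) + volume (Metric.ball q r)
      ≤ volume (cone13 u v y ∩ Metric.closedBall 0 1) + 0 := by
    rw [add_zero, ← hmeasU]
    calc volume ((cone13 u v y ∩ Metric.closedBall 0 1) ∪ Metric.ball q r)
        ≤ volume (cone13 u v w ∩ Metric.closedBall 0 1) := measure_mono hunion_sub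
      _ ≤ volume (cone13 u v y ∩ Metric.closedBall 0 1) := hmin'
  have : volume (Metric.ball q r) ≤ 0 := (ENNReal.add_le_add_iff_left hfin).mp hchain
  exact absurd (le_antisymm this zero_le) hballpos.ne'
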